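/- Let 0 < q < 1, s ∈ ℝ and n ≥ 1. Then H_n(x,s|q) - H_n(qx,s|q) = (1-q)·x·{n}_q·H_{n-1}(x,s|q) as polynomials in x; equivalently, D_q H_n(x,s|q) = {n}_q·H_{n-1}(x,s|q). -/

import Mathlib

/-- The q-number `{n}_q = 1 + q + ⋯ + q^{n-1}`. -/
noncomputable def qNum (q : ℝ) (n : ℕ) : ℝ := ∑ k ∈ Finset.range n, q ^ k

/-- The q-factorial `{n}_q! = Π_{k=1}^n {k}_q`. -/
noncomputable def qFact (q : ℝ) (n : ℕ) : ℝ := ∏ k ∈ Finset.range n, qNum q (k + 1)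

/-- The even q-double factorial `{2k}_q!! = Π_{l=1}^k {2l}_q`. -/
noncomputable def qDoubleFact (q : ℝ) (k : ℕ) : ℝ := ∏ l ∈ Finset.range k, qNum q (2 * (l + 1))

/-- The q-Hermite polynomial `H_n(x,s|q) = Σ_{k=0}^{⌊n/2⌋} (-1)^k q^{k(k-1)}
({n}_q!/({n-2k}_q!·{2k}_q!!)) s^k x^{n-2k}`. -/
noncomputable def qHermite (q s : ℝ) (n : ℕ) : Polynomial ℝ :=
  ∑ k ∈ Finset.range (n / 2 + 1),
    Polynomial.C ((-1 : ℝ) ^ k * q ^ (k * (k - 1)) *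
        (qFact q n / (qFact q (n - 2 * k) * qDoubleFact q k)) * s ^ k) *
      Polynomial.X ^ (n - 2 * k)

/-- The q-derivative on polynomials: it sends `x^j` to `{j}_q x^{j-1}`. -/
noncomputable def qDeriv (q : ℝ) (f : Polynomial ℝ) : Polynomial ℝ :=
  f.sum fun j a => Polynomial.C (a * qNum q j) * Polynomial.X ^ (j - 1)

lemma qNum_pos {q : ℝ} (hq : 0 < q) (m : ℕ) (hm : 1 ≤ m) : 0 < qNum q m := by
  apply Finset.sum_pos (fun i _ => pow_pos hq i)
  exact ⟨0, Finset.mem_range.mpr hm⟩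

lemma qFact_pos {q : ℝ} (hq : 0 < q) (m : ℕ) : 0 < qFact q m :=
  Finset.prod_pos fun i _ => qNum_pos hq _ (by omega)

lemma qDoubleFact_pos {q : ℝ} (hq : 0 < q) (m : ℕ) : 0 < qDoubleFact q m :=
  Finset.prod_pos fun i _ => qNum_pos hq _ (by omega)

lemma qFact_succ (q : ℝ) (m : ℕ) : qFact q (m + 1) = qFact q m * qNum q (m + 1) :=
  Finset.prod_range_succ _ _

lemma one_sub_qNum (q : ℝ) (m : ℕ) : (1 - q) * qNum q m = 1 - q ^ m := by
  have h := geom_sum_mul q m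
  unfold qNum
  linear_combination -h

/-- The key coefficient identity. -/
lemma key_coeff (q : ℝ) (hq0 : 0 < q) (s : ℝ) (n k : ℕ) (hk : 2 * k + 1 ≤ n) :
    ((-1 : ℝ) ^ k * q ^ (k * (k - 1)) *
        (qFact q n / (qFact q (n - 2 * k) * qDoubleFact q k)) * s ^ k) * qNum q (n - 2 * k)
      = qNum q n * ((-1 : ℝ) ^ k * q ^ (k * (k - 1)) *
        (qFact q (n - 1) / (qFact q (n - 1 - 2 * k) * qDoubleFact q k)) * s ^ k) := by
  have h1 : n - 2 * k = (n - 1 - 2 * k) + 1 := by omega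
  have h2 : n = (n - 1) + 1 := by omega
  rw [h1]
  conv_lhs => rw [show n = (n-1)+1 from h2, qFact_succ]
  conv_rhs => rw [show n = (n-1)+1 from h2]
  rw [qFact_succ]
  have hA : qFact q (n - 1 - 2 * k) ≠ 0 := (qFact_pos hq0 _).ne'
  have hB : qDoubleFact q k ≠ 0 := (qDoubleFact_pos hq0 _).ne'
  have hC : qNum q (n - 1 - 2 * k + 1) ≠ 0 := (qNum_pos hq0 _ (by omega)).ne'
  simp only [Nat.add_sub_cancel]
  field_simp

lemma qDeriv_zero (q : ℝ) : qDeriv q 0 = 0 := Polynomial.sum_zero_index _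

lemma qDeriv_add (q : ℝ) (f g : Polynomial ℝ) :
    qDeriv q (f + g) = qDeriv q f + qDeriv q g := by
  unfold qDeriv
  apply Polynomial.sum_add_index
  · intro i; simp
  · intro i a b; rw [add_mul, Polynomial.C_add, add_mul]

lemma qDeriv_sum {ι : Type*} (q : ℝ) (t : Finset ι) (f : ι → Polynomial ℝ) :
    qDeriv q (∑ i ∈ t, f i) = ∑ i ∈ t, qDeriv q (f i) := by
  classical
  induction t using Finset.induction with
  | empty => simp [qDeriv_zero]
  | insert _ _ h ih => rw [Finset.sum_insert h, Finset.sum_insert h, qDeriv_add, ih]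

lemma qDeriv_monomial (q a : ℝ) (m : ℕ) :
    qDeriv q (Polynomial.C a * Polynomial.X ^ m)
      = Polynomial.C (a * qNum q m) * Polynomial.X ^ (m - 1) := by
  rw [Polynomial.C_mul_X_pow_eq_monomial]
  unfold qDeriv
  apply Polynomial.sum_monomial_index
  simp

lemma sum_helper (n : ℕ) (hn : 1 ≤ n) (f g : ℕ → Polynomial ℝ)
    (hzero : ∀ k, 2 * k = n → f k = 0)
    (heq : ∀ k, 2 * k + 1 ≤ n → f k = g k) :
    ∑ k ∈ Finset.range (n / 2 + 1), f k = ∑ k ∈ Finset.range ((n - 1) / 2 + 1), g k := by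
  rcases Nat.even_or_odd n with ⟨t, ht⟩ | ⟨t, ht⟩
  · have h1 : n / 2 + 1 = t + 1 := by omega
    have h2 : (n - 1) / 2 + 1 = t := by omega
    rw [h1, h2, Finset.sum_range_succ, hzero t (by omega), add_zero]
    exact Finset.sum_congr rfl fun k hk => heq k (by simp at hk; omega)
  · have h1 : n / 2 + 1 = t + 1 := by omega
    have h2 : (n - 1) / 2 + 1 = t + 1 := by omega
    rw [h1, h2]
    exact Finset.sum_congr rfl fun k hk => heq k (by simp at hk; omega)

lemma sub_comp_term (c q : ℝ) (m : ℕ) :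
    Polynomial.C c * Polynomial.X ^ m -
        (Polynomial.C c * Polynomial.X ^ m).comp (Polynomial.C q * Polynomial.X)
      = Polynomial.C (c * (1 - q ^ m)) * Polynomial.X ^ m := by
  rw [Polynomial.mul_comp, Polynomial.C_comp, Polynomial.X_pow_comp, mul_pow,
    ← Polynomial.C_pow, Polynomial.C_mul, Polynomial.C_sub, Polynomial.C_1]
  ring

/-- Lowering relation: `H_n(x,s|q) - H_n(qx,s|q) = (1-q)·x·{n}_q·H_{n-1}(x,s|q)`;
equivalently, `D_q H_n(x,s|q) = {n}_q·H_{n-1}(x,s|q)`. -/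
theorem qHermite_lowering (q : ℝ) (hq0 : 0 < q) (hq1 : q < 1) (s : ℝ) (n : ℕ) (hn : 1 ≤ n) :
    qHermite q s n - (qHermite q s n).comp (Polynomial.C q * Polynomial.X) =
        Polynomial.C (1 - q) * Polynomial.X * Polynomial.C (qNum q n) * qHermite q s (n - 1) ∧
      qDeriv q (qHermite q s n) = Polynomial.C (qNum q n) * qHermite q s (n - 1) := by
  constructor
  · rw [qHermite, qHermite, Polynomial.sum_comp, ← Finset.sum_sub_distrib, Finset.mul_sum]
    apply sum_helper n hn
    · intro k hk
      rw [sub_comp_term]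
      have : n - 2 * k = 0 := by omega
      rw [this]
      simp
    · intro k hk
      rw [sub_comp_term]
      have hge : (n - 1 - 2 * k) + 1 = n - 2 * k := by omega
      have hcoef : (1 - q ^ (n - 2 * k)) = (1 - q) * qNum q (n - 2 * k) := by
        rw [one_sub_qNum]
      rw [hcoef]
      have := key_coeff q hq0 s n k hk
      calc Polynomial.C (((-1:ℝ)^k * q^(k*(k-1)) *
              (qFact q n / (qFact q (n - 2*k) * qDoubleFact q k)) * s^k) *
              ((1-q) * qNum q (n - 2*k))) * Polynomial.X ^ (n - 2*k)
          = Polynomial.C ((1-q) * (qNum q n * ((-1:ℝ)^k * q^(k*(k-1)) *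
              (qFact q (n-1) / (qFact q (n-1-2*k) * qDoubleFact q k)) * s^k))) *
              Polynomial.X ^ (n - 2*k) := by
            congr 1
            rw [show ((-1:ℝ)^k * q^(k*(k-1)) *
              (qFact q n / (qFact q (n - 2*k) * qDoubleFact q k)) * s^k) *
              ((1-q) * qNum q (n - 2*k)) = (1-q) * (((-1:ℝ)^k * q^(k*(k-1)) *
              (qFact q n / (qFact q (n - 2*k) * qDoubleFact q k)) * s^k) *
              qNum q (n - 2*k)) from by ring, this]
        _ = Polynomial.C (1-q) * Polynomial.X * Polynomial.C (qNum q n) *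
              (Polynomial.C ((-1:ℝ)^k * q^(k*(k-1)) *
              (qFact q (n-1) / (qFact q (n-1-2*k) * qDoubleFact q k)) * s^k) *
              Polynomial.X ^ (n - 1 - 2*k)) := by
            rw [← hge, pow_succ]
            simp only [Polynomial.C_mul]
            ring
  · rw [qHermite, qHermite, qDeriv_sum, Finset.mul_sum]
    simp only [qDeriv_monomial]
    apply sum_helper n hn
    · intro k hk
      have : n - 2 * k = 0 := by omega
      rw [this]
      simp [qNum]
    · intro k hk
      have hexp : n - 2 * k - 1 = n - 1 - 2 * k := by omega
      rw [hexp, key_coeff q hq0 s n k hk, Polynomial.C_mul, mul_assoc]
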